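/- Let H be a strategic game with the pure belief structure satisfying property B. Then GR̄^α = LR̄^α for all ordinals α. -/

import Mathlib

universe u

/-- Transfinite iterations of an operator on a complete lattice:
`F^0 = ⊤`, `F^(α+1) = F (F^α)`, and `F^β = ⨅_{α<β} F^α` for limit `β`. -/
noncomputable def iterate {D : Type u} [CompleteLattice D] (F : D → D) (α : Ordinal.{0}) : D :=
  Ordinal.limitRecOn α ⊤ (fun _ ih => F ih) (fun β _ ih => ⨅ (γ : Ordinal) (h : γ < β), ih γ h)

/-- `R` is a relaxation of `F`. -/
def Relaxation {D : Type u} [CompleteLattice D] (F R : D → D) : Prop :=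
  ∀ α : Ordinal.{0},
    F (iterate R α) ≤ R (iterate R α) ∧
    (F (iterate R α) ≤ iterate R α → R (iterate R α) ≤ iterate R α) ∧
    (R (iterate R α) = iterate R α → F (iterate R α) = iterate R α)

section Games

variable {n : ℕ} {T : Fin n → Type u}

/-- `GR` operator: strategies that are a best response *in the initial game* to
some opponent belief held in `G`. -/
def GR (p : ∀ i : Fin n, (∀ j, T j) → ℝ) (G : ∀ i, Set (T i)) : ∀ i, Set (T i) :=
  fun i => {s : T i | ∃ μ : ∀ j, T j, (∀ j, j ≠ i → μ j ∈ G j) ∧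
    ∀ s' : T i, p i (Function.update μ i s') ≤ p i (Function.update μ i s)}

/-- `LR` operator: strategies that are a best response *in `G`* to
some opponent belief held in `G`. -/
def LR (p : ∀ i : Fin n, (∀ j, T j) → ℝ) (G : ∀ i, Set (T i)) : ∀ i, Set (T i) :=
  fun i => {s : T i | ∃ μ : ∀ j, T j, (∀ j, j ≠ i → μ j ∈ G j) ∧
    ∀ s' ∈ G i, p i (Function.update μ i s') ≤ p i (Function.update μ i s)}

/-- `s'` strictly dominates `s` on the restriction `G`. -/
def Dom (p : ∀ i : Fin n, (∀ j, T j) → ℝ) (G : ∀ i, Set (T i)) (i : Fin n)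
    (s' s : T i) : Prop :=
  ∀ μ : ∀ j, T j, (∀ j, j ≠ i → μ j ∈ G j) →
    p i (Function.update μ i s) < p i (Function.update μ i s')

/-- `GS` operator: strategies not strictly dominated on `G` by any strategy of the initial game. -/
def GS (p : ∀ i : Fin n, (∀ j, T j) → ℝ) (G : ∀ i, Set (T i)) : ∀ i, Set (T i) :=
  fun i => {s : T i | ¬ ∃ s' : T i, Dom p G i s' s}

/-- `LS` operator: strategies not strictly dominated on `G` by any strategy in `G`. -/
def LS (p : ∀ i : Fin n, (∀ j, T j) → ℝ) (G : ∀ i, Set (T i)) : ∀ i, Set (T i) :=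
  fun i => {s : T i | ¬ ∃ s' ∈ G i, Dom p G i s' s}

/-- Property B: to each belief in the initial game a best response (in the initial game) exists. -/
def PropB (p : ∀ i : Fin n, (∀ j, T j) → ℝ) : Prop :=
  ∀ (i : Fin n) (μ : ∀ j, T j), ∃ s : T i, ∀ s' : T i,
    p i (Function.update μ i s') ≤ p i (Function.update μ i s)

/-- Property D(α). -/
def PropD (p : ∀ i : Fin n, (∀ j, T j) → ℝ) (α : Ordinal.{0}) : Prop :=
  ∀ R : (∀ i, Set (T i)) → (∀ i, Set (T i)), Relaxation (fun G => LS p G ⊓ G) R →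
    ∀ (i : Fin n) (s : T i), (∃ s' : T i, Dom p (iterate R α) i s' s) →
      ∃ s' ∈ iterate R α i, Dom p (iterate R α) i s' s

/-- Property C(α). -/
def PropC (p : ∀ i : Fin n, (∀ j, T j) → ℝ) (α : Ordinal.{0}) : Prop :=
  ∀ R : (∀ i, Set (T i)) → (∀ i, Set (T i)), Relaxation (fun G => LS p G ⊓ G) R →
    ∀ (i : Fin n) (s : T i), (∃ s' : T i, Dom p (iterate R α) i s' s) →
      ∃ s'' : T i, Dom p (iterate R α) i s'' s ∧ ¬ ∃ s' : T i, Dom p (iterate R α) i s' s''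

end Games


lemma iterate_zero' {D : Type u} [CompleteLattice D] (F : D → D) : iterate F 0 = ⊤ :=
  Ordinal.limitRecOn_zero _ _ _

lemma iterate_succ' {D : Type u} [CompleteLattice D] (F : D → D) (α : Ordinal.{0}) :
    iterate F (Order.succ α) = F (iterate F α) :=
  Ordinal.limitRecOn_succ _ _ _ _

lemma iterate_limit' {D : Type u} [CompleteLattice D] (F : D → D) {β : Ordinal.{0}}
    (hβ : Order.IsSuccLimit β) : iterate F β = ⨅ (γ : Ordinal) (_ : γ < β), iterate F γ :=
  Ordinal.limitRecOn_limit _ _ _ _ hβ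

lemma iterate_antitone' {D : Type u} [CompleteLattice D] {F : D → D}
    (hF : ∀ G, F G ≤ G) : ∀ {β α : Ordinal.{0}}, α ≤ β → iterate F β ≤ iterate F α := by
  intro β
  induction β using Ordinal.limitRecOn with
  | zero => intro α h; rw [nonpos_iff_eq_zero.mp h]
  | add_one γ ih =>
    rw [Ordinal.add_one_eq_succ]
    intro α h
    rcases eq_or_lt_of_le h with h | h
    · rw [h]
    · have : α ≤ γ := Order.lt_succ_iff.mp h
      calc iterate F (Order.succ γ) = F (iterate F γ) := iterate_succ' F γ
        _ ≤ iterate F γ := hF _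
        _ ≤ iterate F α := ih this
  | limit γ hγ ih =>
    intro α h
    rcases eq_or_lt_of_le h with h | h
    · rw [h]
    · rw [iterate_limit' F hγ]
      exact iInf_le_of_le α (iInf_le _ h)

lemma mem_iterate_of_br {n : ℕ} {T : Fin n → Type u}
    (p : ∀ i : Fin n, (∀ j, T j) → ℝ) {α : Ordinal.{0}} {i : Fin n} {t : T i}
    {μ : ∀ j, T j}
    (hμ : ∀ j, j ≠ i → μ j ∈ iterate (fun G => GR p G ⊓ G) α j)
    (ht : ∀ s' : T i, p i (Function.update μ i s') ≤ p i (Function.update μ i t)) :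
    ∀ β ≤ α, t ∈ iterate (fun G => GR p G ⊓ G) β i := by
  have hcontr : ∀ G : ∀ i, Set (T i), GR p G ⊓ G ≤ G := fun G => inf_le_right
  intro β
  induction β using Ordinal.limitRecOn with
  | zero => intro _; rw [iterate_zero']; trivial
  | add_one γ ih =>
    rw [Ordinal.add_one_eq_succ]
    intro h
    have hγ : γ ≤ α := le_of_lt (lt_of_lt_of_le (Order.lt_succ γ) h)
    rw [iterate_succ']
    exact ⟨⟨μ, fun j hj => iterate_antitone' hcontr hγ j (hμ j hj), ht⟩, ih hγ⟩
  | limit γ hγ ih =>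
    intro h
    rw [iterate_limit' _ hγ]
    have : ∀ δ < γ, t ∈ iterate (fun G => GR p G ⊓ G) δ i :=
      fun δ hδ => ih δ hδ (le_of_lt (lt_of_lt_of_le hδ h))
    simpa [iInf_apply, Set.iInf_eq_iInter, Set.mem_iInter] using this

set_option linter.unusedVariables false

theorem stmt_9 {n : ℕ} (hn : 2 ≤ n) {T : Fin n → Type u} [∀ i, Nonempty (T i)]
    (p : ∀ i : Fin n, (∀ j, T j) → ℝ) (hB : PropB p) :
    ∀ α : Ordinal.{0},
      iterate (fun G => GR p G ⊓ G) α = iterate (fun G => LR p G ⊓ G) α := by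
  have hcontr : ∀ G : ∀ i, Set (T i), GR p G ⊓ G ≤ G := fun G => inf_le_right
  intro α
  induction α using Ordinal.limitRecOn with
  | zero => rw [iterate_zero', iterate_zero']
  | add_one α ih =>
    rw [Ordinal.add_one_eq_succ, iterate_succ', iterate_succ', ← ih]
    funext i
    ext s
    constructor
    · rintro ⟨⟨μ, hμ, hbr⟩, hsG⟩
      exact ⟨⟨μ, hμ, fun s' _ => hbr s'⟩, hsG⟩
    · rintro ⟨⟨μ, hμ, hbr⟩, hsG⟩
      obtain ⟨t, ht⟩ := hB i μ
      have htG : t ∈ iterate (fun G => GR p G ⊓ G) α i :=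
        mem_iterate_of_br p hμ ht α le_rfl
      exact ⟨⟨μ, hμ, fun s' => le_trans (ht s') (hbr t htG)⟩, hsG⟩
  | limit β hβ ih =>
    rw [iterate_limit' _ hβ, iterate_limit' _ hβ]
    exact iInf_congr fun γ => iInf_congr fun h => ih γ h
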